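/- arXiv:0808.2617 — 6 statements merged into one kernel-verified Lean document; each statement's English description precedes it below -/
import Mathlib

section
/- The function G(x) = (1/2) sgn(x)(1 - e^{-|x|}) satisfies, for all real α, β, γ with α + β + γ = 0 and α, β, γ all nonzero, the functional equation G'(α)(G(β) + G(γ)) + G'(β)(G(γ) + G(α)) + G'(γ)(G(α) + G(β)) = 0, where G'(x) = (1/2)e^{-|x|} for x ≠ 0. -/
noncomputable def G (x : ℝ) : ℝ := (1/2) * Real.sign x * (1 - Real.exp (-|x|))

noncomputable def G' (x : ℝ) : ℝ := (1/2) * Real.exp (-|x|)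

lemma G_neg (x : ℝ) : G (-x) = -G x := by
  simp [G, Real.sign_neg, abs_neg]

lemma G'_neg (x : ℝ) : G' (-x) = G' x := by
  simp [G', abs_neg]

lemma G_key (a b : ℝ) (ha : 0 < a) (hb : 0 < b) :
    G' a * (G b + G (-(a+b))) + G' b * (G (-(a+b)) + G a)
      + G' (-(a+b)) * (G a + G b) = 0 := by
  have hab : 0 < a + b := by linarith
  simp only [G, G', Real.sign_of_pos ha, Real.sign_of_pos hb,
    Real.sign_of_neg (by linarith : -(a+b) < 0), abs_of_pos ha, abs_of_pos hb,
    abs_neg, abs_of_pos hab]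
  rw [show -(a+b) = -a + -b by ring, Real.exp_add]
  ring

lemma G_key' (a b : ℝ) (ha : 0 < a) (hb : 0 < b) :
    G' (-a) * (G (-b) + G (a+b)) + G' (-b) * (G (a+b) + G (-a))
      + G' (a+b) * (G (-a) + G (-b)) = 0 := by
  rw [show (a+b) = -(-(a+b)) by ring, G_neg (-(a+b)), G'_neg (-(a+b)),
    G_neg a, G_neg b, G'_neg a, G'_neg b]
  have h := G_key a b ha hb
  linarith

theorem G_functional_equation (α β γ : ℝ) (hα : α ≠ 0) (hβ : β ≠ 0) (hγ : γ ≠ 0)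
    (hsum : α + β + γ = 0) :
    G' α * (G β + G γ) + G' β * (G γ + G α) + G' γ * (G α + G β) = 0 := by
  rcases hα.lt_or_gt with ha | ha <;> rcases hβ.lt_or_gt with hb | hb <;>
    rcases hγ.lt_or_gt with hc | hc
  · linarith
  · -- α<0, β<0, γ>0 : γ = -α + -β
    have h := G_key' (-α) (-β) (by linarith) (by linarith)
    rw [show -α + -β = γ by linarith, neg_neg, neg_neg] at h
    linarith
  · -- α<0, β>0, γ<0 : β = -α + -γ
    have h := G_key' (-α) (-γ) (by linarith) (by linarith)
    rw [show -α + -γ = β by linarith, neg_neg, neg_neg] at h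
    linarith
  · -- α<0, β>0, γ>0 : α = -(β+γ)
    have h := G_key β γ hb hc
    rw [show -(β + γ) = α by linarith] at h
    linarith
  · -- α>0, β<0, γ<0 : α = -β + -γ
    have h := G_key' (-β) (-γ) (by linarith) (by linarith)
    rw [show -β + -γ = α by linarith, neg_neg, neg_neg] at h
    linarith
  · -- α>0, β<0, γ>0 : β = -(α+γ)
    have h := G_key α γ ha hc
    rw [show -(α + γ) = β by linarith] at h
    linarith
  · -- α>0, β>0, γ<0
    have h := G_key α β ha hb
    rw [show -(α + β) = γ by linarith] at h
    linarith
  · linarith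
end

section
/- For the N-peakon bracket of the Popowicz system, each quantity C_j = a_j / b_j² (for b_j ≠ 0) is a Casimir: its bracket with each of the coordinate functions a_k, b_k, q_k vanishes for all k. Verify this for N = 2 and j = 1: {C₁, a₂} = {C₁, b₂} = {C₁, q₂} = {C₁, a₁} = {C₁, b₁} = {C₁, q₁} = 0, where the bracket of functions is computed via the Leibniz rule from the elementary brackets. -/
/-- The Casimir property of `C₁ = a₁/b₁²` for the 2-peakon Poisson bracket of the
Popowicz system.  The bracket of `C₁` with a coordinate function `g` is computed
via the Leibniz rule: `{C₁, g} = (∂C₁/∂a₁){a₁,g} + (∂C₁/∂b₁){b₁,g} + (∂C₁/∂q₁){q₁,g}`,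
with `∂C₁/∂a₁ = 1/b₁²`, `∂C₁/∂b₁ = -2a₁/b₁³`, `∂C₁/∂q₁ = 0`, and the elementary
brackets given by the formulas of the Popowicz peakon Poisson structure
(using antisymmetry, e.g. `{b₁,a₂} = -{a₂,b₁}`). -/
theorem casimir_C1_two_peakon (a₁ a₂ b₁ b₂ q₁ q₂ : ℝ) (hb₁ : b₁ ≠ 0)
    (s : ℝ) (hs : s = Real.sign (q₁ - q₂))
    (E : ℝ) (hE : E = Real.exp (-|q₁ - q₂|))
    (s₀ : ℝ) (hs₀ : s₀ = Real.sign (q₁ - q₁))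
    (E₀ : ℝ) (hE₀ : E₀ = Real.exp (-|q₁ - q₁|)) :
    -- {C₁, a₂} = 0
    ((1/b₁^2) * (2 * a₁ * a₂ * s * E)
      + (-(2 * a₁ / b₁^3)) * (-(a₂ * b₁ * Real.sign (q₂ - q₁) * E))
      + 0 * (a₂ * E) = 0) ∧
    -- {C₁, b₂} = 0
    ((1/b₁^2) * (a₁ * b₂ * s * E)
      + (-(2 * a₁ / b₁^3)) * ((1/2) * b₁ * b₂ * s * E)
      + 0 * ((1/2) * b₂ * E) = 0) ∧
    -- {C₁, q₂} = 0
    ((1/b₁^2) * (-(a₁ * E))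
      + (-(2 * a₁ / b₁^3)) * (-((1/2) * b₁ * E))
      + 0 * ((1/2) * s * (1 - E)) = 0) ∧
    -- {C₁, a₁} = 0
    ((1/b₁^2) * (2 * a₁ * a₁ * s₀ * E₀)
      + (-(2 * a₁ / b₁^3)) * (-(a₁ * b₁ * s₀ * E₀))
      + 0 * (a₁ * E₀) = 0) ∧
    -- {C₁, b₁} = 0
    ((1/b₁^2) * (a₁ * b₁ * s₀ * E₀)
      + (-(2 * a₁ / b₁^3)) * ((1/2) * b₁ * b₁ * s₀ * E₀)
      + 0 * ((1/2) * b₁ * E₀) = 0) ∧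
    -- {C₁, q₁} = 0
    ((1/b₁^2) * (-(a₁ * E₀))
      + (-(2 * a₁ / b₁^3)) * (-((1/2) * b₁ * E₀))
      + 0 * ((1/2) * s₀ * (1 - E₀)) = 0) := by
  have hsgn : Real.sign (q₂ - q₁) = -s := by
    rw [hs, ← Real.sign_neg]; ring_nf
  have hs0 : s₀ = 0 := by simp [hs₀]
  subst hs0
  rw [hsgn]
  refine ⟨by field_simp; ring, by field_simp; ring, by field_simp; ring,
    by ring, by ring, by field_simp; ring⟩
end

section
/- For the 2-peakon system of the Popowicz equation, the quantity J = b₁b₂(1 - e^{-|q₁ - q₂|}) Poisson-commutes with the Hamiltonian h = 2(a₁ + b₁ + a₂ + b₂): {J, h} = 0, where brackets are computed from the elementary peakon brackets via the Leibniz rule (on the region q₁ ≠ q₂). -/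
/-- For the 2-peakon system of the Popowicz equation, `J = b₁b₂(1 - e^{-|q₁-q₂|})`
Poisson-commutes with the Hamiltonian `h = 2(a₁ + a₂ + b₁ + b₂)`.  The bracket
`{J, h}` is computed via the Leibniz rule as
`{J,h} = (∂J/∂b₁){b₁,h} + (∂J/∂b₂){b₂,h} + (∂J/∂q₁){q₁,h} + (∂J/∂q₂){q₂,h}`
with `{x,h} = 2({x,a₁} + {x,a₂} + {x,b₁} + {x,b₂})` and the elementary brackets
of the Popowicz peakon Poisson structure (antisymmetry giving e.g.
`{b₁,a₂} = -{a₂,b₁}`), on the region `q₁ ≠ q₂`. -/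
theorem J_commutes_with_h (a₁ a₂ b₁ b₂ q₁ q₂ : ℝ) (hq : q₁ ≠ q₂)
    (s : ℝ) (hs : s = Real.sign (q₁ - q₂))
    (s' : ℝ) (hs' : s' = Real.sign (q₂ - q₁))
    (s₀ : ℝ) (hs₀ : s₀ = Real.sign (0 : ℝ))
    (E : ℝ) (hE : E = Real.exp (-|q₁ - q₂|))
    (E₀ : ℝ) (hE₀ : E₀ = Real.exp (-|(0 : ℝ)|)) :
    (b₂ * (1 - E)) *
        (2 * ((-(a₁ * b₁ * s₀ * E₀)) + (-(a₂ * b₁ * s' * E))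
            + (1/2) * b₁ * b₁ * s₀ * E₀ + (1/2) * b₁ * b₂ * s * E))
      + (b₁ * (1 - E)) *
        (2 * ((-(a₁ * b₂ * s * E)) + (-(a₂ * b₂ * s₀ * E₀))
            + (1/2) * b₂ * b₁ * s' * E + (1/2) * b₂ * b₂ * s₀ * E₀))
      + (b₁ * b₂ * s * E) *
        (2 * (a₁ * E₀ + a₂ * E + (1/2) * b₁ * E₀ + (1/2) * b₂ * E))
      + (-(b₁ * b₂ * s * E)) *
        (2 * (a₁ * E + a₂ * E₀ + (1/2) * b₁ * E + (1/2) * b₂ * E₀)) = 0 := by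
  have h0 : s₀ = 0 := by simp [hs₀]
  have h1 : E₀ = 1 := by simp [hE₀]
  have h2 : s' = -s := by
    rw [hs, hs', ← Real.sign_neg, neg_sub]
  subst h0 h1 h2 hs
  ring
end

section
/- Along solutions of the N-peakon ODE system of the Popowicz system, each quantity a_j / b_j² is a constant of motion: d/dt (a_j(t)/b_j(t)²) = 0, provided b_j(t) ≠ 0. -/
open Real

theorem casimir_conserved_N_peakon (N : ℕ) (a b q : Fin N → ℝ → ℝ)
    (ha : ∀ j t, HasDerivAt (a j)
      (2 * a j t * ∑ k, (2 * a k t + b k t) * Real.sign (q j t - q k t)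
        * Real.exp (-|q j t - q k t|)) t)
    (hb : ∀ j t, HasDerivAt (b j)
      (b j t * ∑ k, (2 * a k t + b k t) * Real.sign (q j t - q k t)
        * Real.exp (-|q j t - q k t|)) t)
    (hq : ∀ j t, HasDerivAt (q j)
      (∑ k, (2 * a k t + b k t) * Real.exp (-|q j t - q k t|)) t)
    (hbne : ∀ j t, b j t ≠ 0) :
    ∀ j t, deriv (fun s => a j s / (b j s)^2) t = 0 := by
  intro j t
  set S := ∑ k, (2 * a k t + b k t) * Real.sign (q j t - q k t)
        * Real.exp (-|q j t - q k t|) with hS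
  have hb2 : HasDerivAt (fun s => (b j s)^2) (2 * (b j t) * (b j t * S)) t := by
    have h := (hb j t).fun_pow 2
    refine h.congr_deriv ?_
    push_cast
    rw [hS]
    ring
  have hdiv : HasDerivAt (fun s => a j s / (b j s)^2)
      ((2 * a j t * S * (b j t)^2 - a j t * (2 * (b j t) * (b j t * S))) / ((b j t)^2)^2) t :=
    (ha j t).div hb2 (pow_ne_zero 2 (hbne j t))
  rw [hdiv.deriv]
  have : 2 * a j t * S * (b j t)^2 - a j t * (2 * (b j t) * (b j t * S)) = 0 := by ring
  rw [this, zero_div]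
end

section
/- Along solutions of the 2-peakon ODE system of the Popowicz system with q₁(t) ≠ q₂(t) for all t, the quantity J(t) = b₁(t)b₂(t)(1 - e^{-|q₁(t) - q₂(t)|}) is a constant of motion: dJ/dt = 0. -/
theorem J_conserved_two_peakon (a₁ a₂ b₁ b₂ q₁ q₂ : ℝ → ℝ)
    (a : Fin 2 → ℝ → ℝ) (b : Fin 2 → ℝ → ℝ) (q : Fin 2 → ℝ → ℝ)
    (haidx : a = ![a₁, a₂]) (hbidx : b = ![b₁, b₂]) (hqidx : q = ![q₁, q₂])
    (ha : ∀ j t, HasDerivAt (a j)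
      (2 * a j t * ∑ k, (2 * a k t + b k t) * Real.sign (q j t - q k t)
        * Real.exp (-|q j t - q k t|)) t)
    (hb : ∀ j t, HasDerivAt (b j)
      (b j t * ∑ k, (2 * a k t + b k t) * Real.sign (q j t - q k t)
        * Real.exp (-|q j t - q k t|)) t)
    (hq : ∀ j t, HasDerivAt (q j)
      (∑ k, (2 * a k t + b k t) * Real.exp (-|q j t - q k t|)) t)
    (horder : ∀ t, q₁ t > q₂ t) :
    ∀ t, deriv (fun s => b₁ s * b₂ s * (1 - Real.exp (-|q₁ s - q₂ s|))) t = 0 := by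
  intro t
  have hpos : ∀ s, (0:ℝ) < q₁ s - q₂ s := fun s => sub_pos.mpr (horder s)
  have habs : ∀ s, |q₁ s - q₂ s| = q₁ s - q₂ s := fun s => abs_of_pos (hpos s)
  have habs' : ∀ s, |q₂ s - q₁ s| = q₁ s - q₂ s := fun s => by
    rw [abs_sub_comm]; exact habs s
  have hfun : (fun s => b₁ s * b₂ s * (1 - Real.exp (-|q₁ s - q₂ s|)))
      = fun s => b₁ s * b₂ s * (1 - Real.exp (-(q₁ s - q₂ s))) := by
    funext s; rw [habs]
  rw [hfun]
  have h1 := hb 0 t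
  have h2 := hb 1 t
  have hq1 := hq 0 t
  have hq2 := hq 1 t
  simp only [haidx, hbidx, hqidx, Fin.sum_univ_two, Matrix.cons_val_zero,
    Matrix.cons_val_one, Matrix.head_cons, sub_self, Real.sign_zero,
    abs_zero, neg_zero, Real.exp_zero, mul_zero, zero_mul, mul_one,
    add_zero, zero_add, habs, habs'] at h1 h2 hq1 hq2
  rw [Real.sign_of_pos (hpos t)] at h1
  rw [Real.sign_of_neg (by linarith [hpos t])] at h2
  have hd : HasDerivAt (fun s => q₁ s - q₂ s) _ t := hq1.sub hq2
  have hE := ((hd.neg).exp)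
  have hD := (h1.mul h2).mul ((hasDerivAt_const t (1:ℝ)).sub hE)
  rw [show (fun s => b₁ s * b₂ s * (1 - Real.exp (-(q₁ s - q₂ s)))) = (b₁ * b₂ * ((fun x => 1) - fun x => Real.exp ((-fun s => q₁ s - q₂ s) x))) from rfl, hD.deriv]
  simp only [Pi.mul_apply, Pi.sub_apply, Pi.neg_apply]
  ring
end

section
/- Along solutions of the N-peakon ODE system of the Popowicz system, the Hamiltonian h = 2 Σ_{j=1}^N (a_j + b_j) is conserved: dh/dt = 0. -/
lemma antisym_double_sum {N : ℕ} (F : Fin N → Fin N → ℝ)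
    (h : ∀ j k, F j k = - F k j) : ∑ j, ∑ k, F j k = 0 := by
  have h2 : ∑ j, ∑ k, F j k = - ∑ j, ∑ k, F j k := by
    calc ∑ j, ∑ k, F j k = ∑ j, ∑ k, F k j := Finset.sum_comm
    _ = ∑ j, ∑ k, - F j k := by
        refine Finset.sum_congr rfl fun j _ => Finset.sum_congr rfl fun k _ => ?_
        rw [← h]
    _ = - ∑ j, ∑ k, F j k := by simp
  linarith

theorem hamiltonian_conserved_N_peakon (N : ℕ) (a b q : Fin N → ℝ → ℝ)
    (ha : ∀ j t, HasDerivAt (a j)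
      (2 * a j t * ∑ k, (2 * a k t + b k t) * Real.sign (q j t - q k t)
        * Real.exp (-|q j t - q k t|)) t)
    (hb : ∀ j t, HasDerivAt (b j)
      (b j t * ∑ k, (2 * a k t + b k t) * Real.sign (q j t - q k t)
        * Real.exp (-|q j t - q k t|)) t)
    (hq : ∀ j t, HasDerivAt (q j)
      (∑ k, (2 * a k t + b k t) * Real.exp (-|q j t - q k t|)) t) :
    ∀ t, deriv (fun s => 2 * ∑ j, (a j s + b j s)) t = 0 := by
  intro t
  set D : Fin N → ℝ := fun j => ∑ k, (2 * a k t + b k t) * Real.sign (q j t - q k t)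
    * Real.exp (-|q j t - q k t|) with hD
  have hd : HasDerivAt (fun s => 2 * ∑ j, (a j s + b j s))
      (2 * ∑ j, (2 * a j t * D j + b j t * D j)) t := by
    refine HasDerivAt.const_mul 2 ?_
    exact HasDerivAt.fun_sum (fun j _ => (ha j t).add (hb j t))
  rw [hd.deriv]
  have key : ∑ j, (2 * a j t * D j + b j t * D j) = 0 := by
    have : ∀ j, 2 * a j t * D j + b j t * D j
        = ∑ k, (2 * a j t + b j t) * ((2 * a k t + b k t)
            * Real.sign (q j t - q k t) * Real.exp (-|q j t - q k t|)) := by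
      intro j
      rw [← Finset.mul_sum]
      show 2 * a j t * D j + b j t * D j = (2 * a j t + b j t) * D j
      ring
    rw [Finset.sum_congr rfl fun j _ => this j]
    apply antisym_double_sum
    intro j k
    have hs : Real.sign (q j t - q k t) = - Real.sign (q k t - q j t) := by
      rw [← Real.sign_neg]; ring_nf
    have habs : |q j t - q k t| = |q k t - q j t| := abs_sub_comm _ _
    rw [hs, habs]; ring
  rw [key, mul_zero]
end
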